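/- Let A be an infinite finitely generated abelian group. Then RF_A(n) ⪯ log(n), i.e., there is a constant C such that every nontrivial element a ∈ A of word length at most n can be separated from the identity in a finite quotient of A of order at most C·log(C·n). -/

import Mathlib

open DirectSum

noncomputable def wordLen {A : Type*} [Group A] (S : Set A) (a : A) : ℕ :=
  sInf {n | ∃ l : List A, (∀ x ∈ l, x ∈ S ∨ x⁻¹ ∈ S) ∧ l.prod = a ∧ l.length = n}


lemma centralBinom_dvd_lcm (s : ℕ) (hs : 0 < s) :
    Nat.centralBinom s ∣ (Finset.Icc 1 (2 * s)).lcm id := by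
  have hL : (Finset.Icc 1 (2 * s)).lcm id ≠ 0 := by
    rw [Ne, Finset.lcm_eq_zero_iff]
    intro h
    obtain ⟨b, hb, hb0⟩ := h
    simp only [id] at hb0
    subst hb0
    simp at hb
  rw [← Nat.factorization_le_iff_dvd (Nat.centralBinom_ne_zero s) hL]
  intro p
  by_cases hp : p.Prime
  · set e := (Nat.centralBinom s).factorization p with he
    have h1 : p ^ e ≤ 2 * s := Nat.pow_factorization_choose_le (by omega)
    have h2 : p ^ e ∣ (Finset.Icc 1 (2 * s)).lcm id := by
      have : p ^ e ∈ Finset.Icc 1 (2 * s) := by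
        simp only [Finset.mem_Icc]
        exact ⟨Nat.one_le_iff_ne_zero.mpr (pow_ne_zero _ hp.ne_zero), h1⟩
      exact Finset.dvd_lcm this
    exact (Nat.Prime.pow_dvd_iff_le_factorization hp hL).mp h2
  · simp [Nat.factorization_eq_zero_of_not_prime _ hp]

lemma exists_small_nondvd (m : ℕ) (hm : 0 < m) :
    ∃ k : ℕ, 2 ≤ k ∧ ¬ k ∣ m ∧ k ≤ 2 * Nat.log 2 m + 8 := by
  by_contra h
  push_neg at h
  set s : ℕ := Nat.log 2 m + 4 with hs
  have hdvd : ∀ b ∈ Finset.Icc 1 (2 * s), b ∣ m := by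
    intro b hb
    simp only [Finset.mem_Icc] at hb
    rcases Nat.lt_or_ge b 2 with hb2 | hb2
    · have : b = 1 := by omega
      simp [this]
    · by_contra hbd
      have := h b hb2 hbd
      omega
  have hLm : (Finset.Icc 1 (2 * s)).lcm id ∣ m := Finset.lcm_dvd hdvd
  have hcb : Nat.centralBinom s ∣ m :=
    (centralBinom_dvd_lcm s (by omega)).trans hLm
  have hcbm : Nat.centralBinom s ≤ m := Nat.le_of_dvd hm hcb
  -- central binomial lower bound: 2^s < centralBinom s
  have h4 : 4 ^ s < s * Nat.centralBinom s := Nat.four_pow_lt_mul_centralBinom s (by omega)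
  have hs2 : s ≤ 2 ^ s := (Nat.lt_two_pow_self (n := s)).le
  have h2s : 2 ^ s * 2 ^ s = 4 ^ s := by
    rw [← Nat.mul_pow]
  have hlow : 2 ^ s < Nat.centralBinom s := by
    have : 2 ^ s * 2 ^ s < 2 ^ s * Nat.centralBinom s := by
      calc 2 ^ s * 2 ^ s = 4 ^ s := h2s
        _ < s * Nat.centralBinom s := h4
        _ ≤ 2 ^ s * Nat.centralBinom s := Nat.mul_le_mul_right _ hs2
    exact Nat.lt_of_mul_lt_mul_left this
  have hup : m < 2 ^ s := by
    calc m < 2 ^ (Nat.log 2 m + 1) := Nat.lt_pow_succ_log_self (by norm_num) m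
      _ ≤ 2 ^ s := Nat.pow_le_pow_right (by norm_num) (by omega)
  omega

lemma exists_word {A : Type*} [Group A] (S : Finset A)
    (hgen : Subgroup.closure (S : Set A) = ⊤) (a : A) :
    ∃ l : List A, (∀ x ∈ l, x ∈ (S : Set A) ∨ x⁻¹ ∈ (S : Set A)) ∧ l.prod = a := by
  have ha : a ∈ Subgroup.closure (S : Set A) := hgen ▸ Subgroup.mem_top a
  rw [← Subgroup.mem_toSubmonoid, Subgroup.closure_toSubmonoid] at ha
  obtain ⟨l, hl, hprod⟩ := Submonoid.exists_list_of_mem_closure ha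
  refine ⟨l, fun x hx => ?_, hprod⟩
  rcases hl x hx with h | h
  · exact Or.inl h
  · exact Or.inr (by simpa using h)

lemma exists_word_of_wordLen_le {A : Type*} [Group A] (S : Finset A)
    (hgen : Subgroup.closure (S : Set A) = ⊤) (a : A) (n : ℕ)
    (h : wordLen (S : Set A) a ≤ n) :
    ∃ l : List A, (∀ x ∈ l, x ∈ (S : Set A) ∨ x⁻¹ ∈ (S : Set A)) ∧ l.prod = a ∧
      l.length ≤ n := by
  obtain ⟨l₀, hl₀, hp₀⟩ := exists_word S hgen a
  have hne : {n | ∃ l : List A, (∀ x ∈ l, x ∈ (S : Set A) ∨ x⁻¹ ∈ (S : Set A)) ∧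
      l.prod = a ∧ l.length = n}.Nonempty := ⟨l₀.length, l₀, hl₀, hp₀, rfl⟩
  obtain ⟨l, hl, hp, hlen⟩ := Nat.sInf_mem hne
  exact ⟨l, hl, hp, hlen ▸ h⟩

lemma word_bound {A : Type*} [CommGroup A] (f : Additive A →+ ℤ) (B : ℕ)
    (l : List A) (hB : ∀ x ∈ l, (f (Additive.ofMul x)).natAbs ≤ B) :
    (f (Additive.ofMul l.prod)).natAbs ≤ B * l.length := by
  induction l with
  | nil => simp
  | cons x xs ih =>
      have hx : (f (Additive.ofMul x)).natAbs ≤ B := hB x (List.mem_cons_self (a := x) (l := xs))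
      have hxs := ih (fun y hy => hB y (List.mem_cons_of_mem _ hy))
      have heq : f (Additive.ofMul (x :: xs).prod)
          = f (Additive.ofMul x) + f (Additive.ofMul xs.prod) := by
        rw [List.prod_cons]
        rw [show Additive.ofMul (x * xs.prod)
          = Additive.ofMul x + Additive.ofMul xs.prod from rfl, map_add]
      rw [heq]
      calc (f (Additive.ofMul x) + f (Additive.ofMul xs.prod)).natAbs
          ≤ (f (Additive.ofMul x)).natAbs + (f (Additive.ofMul xs.prod)).natAbs :=
            Int.natAbs_add_le _ _
        _ ≤ B + B * xs.length := Nat.add_le_add hx hxs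
        _ = B * (x :: xs).length := by simp [List.length_cons]; ring

lemma ker_helper {A M : Type*} [CommGroup A] [Group M] [Finite M] (ψ : A →* M) :
    (ψ.ker).FiniteIndex ∧ Nat.card (A ⧸ ψ.ker) ≤ Nat.card M := by
  have e := QuotientGroup.quotientKerEquivRange ψ
  have hcard : Nat.card (A ⧸ ψ.ker) = Nat.card ψ.range := Nat.card_congr e.toEquiv
  have h2 : Nat.card ψ.range ≤ Nat.card M :=
    Nat.card_le_card_of_injective _ Subtype.val_injective
  haveI : Finite (A ⧸ ψ.ker) := Finite.of_equiv _ e.toEquiv.symm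
  exact ⟨Subgroup.finiteIndex_of_finite_quotient, hcard ▸ h2⟩

/-- for an infinite finitely generated abelian group `A`,
`RF_A(n) ⪯ log n`: there is `C > 0` such that every nontrivial element of word
length at most `n` dies in no finite quotient of order at most `C·log(C·n)`,
i.e. it is separated from the identity in a finite quotient of `A` of order at
most `C · log (C · n)`. -/
theorem stmt3 {A : Type*} [CommGroup A] [Infinite A] (S : Finset A)
    (hgen : Subgroup.closure (S : Set A) = ⊤) :
    ∃ C : ℕ, 0 < C ∧ ∀ (n : ℕ) (a : A), a ≠ 1 → wordLen (S : Set A) a ≤ n →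
      ∃ N : Subgroup A, N.Normal ∧ N.FiniteIndex ∧ a ∉ N ∧
        Nat.card (A ⧸ N) ≤ C * Nat.log 2 (C * n) := by
  classical
  haveI hFG : Group.FG A := ⟨⟨S, hgen⟩⟩
  haveI : AddGroup.FG (Additive A) := GroupFG.iff_add_fg.mp hFG
  obtain ⟨r, ι, fι, p, hp, e, ⟨eqv⟩⟩ :=
    AddCommGroup.equiv_free_prod_directSum_zmod (Additive A)
  haveI : ∀ i : ι, NeZero (p i ^ e i) := fun i => ⟨pow_ne_zero _ (hp i).ne_zero⟩
  haveI hfinG : Finite (⨁ i : ι, ZMod (p i ^ e i)) :=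
    Finite.of_injective (fun x i => x i) DFunLike.coe_injective
  set f : Fin r → (Additive A →+ ℤ) := fun i =>
    (Finsupp.applyAddHom i).comp ((AddMonoidHom.fst _ _).comp eqv.toAddMonoidHom) with hf
  set Bi : Fin r → ℕ := fun i => S.sup fun s => ((f i) (Additive.ofMul s)).natAbs with hBi
  set B : ℕ := Finset.univ.sup Bi with hB
  set T : ℕ := Nat.card (⨁ i : ι, ZMod (p i ^ e i)) with hT
  refine ⟨B + T + 10, by omega, ?_⟩
  set C : ℕ := B + T + 10 with hC
  intro n a ha hlen
  obtain ⟨l, hl, hprod, hlength⟩ := exists_word_of_wordLen_le S hgen a n hlen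
  have hn : 1 ≤ n := by
    rcases Nat.eq_zero_or_pos n with h0 | h
    · exfalso
      apply ha
      have : l = [] := List.length_eq_zero_iff.mp (by omega)
      rw [← hprod, this, List.prod_nil]
    · exact h
  have hCn2 : 2 ≤ C * n := by
    have := Nat.mul_le_mul_left C hn
    omega
  have hlog1 : 1 ≤ Nat.log 2 (C * n) := Nat.log_pos (by norm_num) hCn2
  have hxa : eqv (Additive.ofMul a) ≠ 0 := by
    intro h
    apply ha
    have h2 : Additive.ofMul a = 0 := by
      apply eqv.injective; simpa using h
    simpa using h2
  by_cases hv : (eqv (Additive.ofMul a)).1 = 0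
  · -- torsion case
    have ht : (eqv (Additive.ofMul a)).2 ≠ 0 := fun h => hxa (Prod.ext hv h)
    set ψ : A →* Multiplicative (⨁ i : ι, ZMod (p i ^ e i)) :=
      AddMonoidHom.toMultiplicativeRight ((AddMonoidHom.snd _ _).comp eqv.toAddMonoidHom) with hψ
    obtain ⟨hfi, hcard⟩ := ker_helper ψ
    refine ⟨ψ.ker, inferInstance, hfi, ?_, ?_⟩
    · rw [MonoidHom.mem_ker]
      intro h
      apply ht
      have h2 : ψ a = 1 := h
      rw [hψ] at h2
      simpa [AddMonoidHom.coe_toMultiplicativeRight] using h2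
    · have hTcard : Nat.card (Multiplicative (⨁ i : ι, ZMod (p i ^ e i))) = T := rfl
      have hTpos : 0 < T := Nat.card_pos
      calc Nat.card (A ⧸ ψ.ker) ≤ T := hTcard ▸ hcard
        _ ≤ C * 1 := by omega
        _ ≤ C * Nat.log 2 (C * n) := Nat.mul_le_mul_left C hlog1
  · -- infinite order case
    obtain ⟨i, hi⟩ : ∃ i, (eqv (Additive.ofMul a)).1 i ≠ 0 := by
      by_contra h
      push_neg at h
      exact hv (Finsupp.ext h)
    set m : ℤ := (eqv (Additive.ofMul a)).1 i with hm
    have hfm : f i (Additive.ofMul a) = m := rfl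
    have hxb : ∀ x ∈ l, ((f i) (Additive.ofMul x)).natAbs ≤ Bi i := by
      intro x hx
      rcases hl x hx with hxS | hxS
      · have hxS' : x ∈ S := hxS
        simp only [hBi]
        exact Finset.le_sup (f := fun s => ((f i) (Additive.ofMul s)).natAbs) hxS'
      · have hxS' : x⁻¹ ∈ S := hxS
        have heq : (f i) (Additive.ofMul x) = -((f i) (Additive.ofMul x⁻¹)) := by
          have h' : Additive.ofMul x = -(Additive.ofMul x⁻¹) := by simp
          rw [h', map_neg]
        rw [heq, Int.natAbs_neg]
        simp only [hBi]
        exact Finset.le_sup (f := fun s => ((f i) (Additive.ofMul s)).natAbs) hxS'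
    have hbound : m.natAbs ≤ C * n := by
      have h1 : m.natAbs ≤ Bi i * l.length := by
        rw [← hfm, ← hprod]
        exact word_bound (f i) (Bi i) l hxb
      have h2 : Bi i ≤ B := by
        simp only [hB]
        exact Finset.le_sup (Finset.mem_univ i)
      calc m.natAbs ≤ Bi i * l.length := h1
        _ ≤ B * n := Nat.mul_le_mul h2 hlength
        _ ≤ C * n := Nat.mul_le_mul_right n (by omega)
    have hm0 : 0 < m.natAbs := Int.natAbs_pos.mpr hi
    obtain ⟨k, hk2, hkdvd, hkle⟩ := exists_small_nondvd m.natAbs hm0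
    haveI : NeZero k := ⟨by omega⟩
    set ψ : A →* Multiplicative (ZMod k) :=
      AddMonoidHom.toMultiplicativeRight ((Int.castAddHom (ZMod k)).comp (f i)) with hψ
    obtain ⟨hfi, hcard⟩ := ker_helper ψ
    refine ⟨ψ.ker, inferInstance, hfi, ?_, ?_⟩
    · rw [MonoidHom.mem_ker]
      intro h
      have h2 : ψ a = 1 := h
      rw [hψ] at h2
      have h3 : ((m : ZMod k)) = 0 := by
        simpa [AddMonoidHom.coe_toMultiplicativeRight, hfm] using h2
      rw [ZMod.intCast_zmod_eq_zero_iff_dvd] at h3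
      exact hkdvd (Int.natCast_dvd.mp h3)
    · have hkcard : Nat.card (Multiplicative (ZMod k)) = k := Nat.card_zmod k
      have hlogm : Nat.log 2 m.natAbs ≤ Nat.log 2 (C * n) :=
        Nat.log_mono_right hbound
      have hCL : 2 * Nat.log 2 (C * n) + 8 ≤ C * Nat.log 2 (C * n) := by
        have h10 : 10 * Nat.log 2 (C * n) ≤ C * Nat.log 2 (C * n) :=
          Nat.mul_le_mul_right _ (by omega)
        omega
      calc Nat.card (A ⧸ ψ.ker) ≤ Nat.card (Multiplicative (ZMod k)) := hcard
        _ = k := hkcard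
        _ ≤ 2 * Nat.log 2 m.natAbs + 8 := hkle
        _ ≤ 2 * Nat.log 2 (C * n) + 8 := by omega
        _ ≤ C * Nat.log 2 (C * n) := hCL
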